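/- Let K be a number field such that for some constant ρ_K and exponent θ ∈ (0,1), N_K(y) = ρ_K y + O(y^{1−θ}) as y → ∞. Then for every integer m ≥ 2, the number of m-tuples of pairwise-generating ideals, #{(𝔞₁,…,𝔞_m) : N𝔞_i ≤ x for all i, 𝔞₁+⋯+𝔞_m = O_K}, equals N_K(x)^m/ζ_K(m) + O_{K,m,ε}(x^{m−θ+ε}). -/

import Mathlib

open NumberField Ideal Filter

/-- `NKcount K y` is the number of nonzero integral ideals of `𝓞 K` of norm at most `y`. -/
noncomputable def NKcount (K : Type) [Field K] [NumberField K] (y : ℝ) : ℕ :=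
  Set.ncard {I : Ideal (𝓞 K) | I ≠ 0 ∧ (absNorm I : ℝ) ≤ y}

/-- The Dedekind zeta function of `K` at a real argument `s > 1`. -/
noncomputable def zetaK (K : Type) [Field K] [NumberField K] (s : ℝ) : ℝ :=
  ∑' I : {I : Ideal (𝓞 K) // I ≠ 0}, (absNorm I.1 : ℝ) ^ (-s)

open scoped Classical
set_option maxHeartbeats 1000000
set_option synthInstance.maxHeartbeats 400000
set_option linter.unusedSectionVars false

section Aux

variable (K : Type) [Field K] [NumberField K]

lemma NKfinite (x : ℝ) : {I : Ideal (𝓞 K) | I ≠ 0 ∧ (absNorm I : ℝ) ≤ x}.Finite := by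
  refine (Ideal.finite_setOf_absNorm_le ⌊x⌋₊).subset ?_
  rintro I ⟨-, h⟩
  exact Nat.le_floor h

noncomputable def Fx (x : ℝ) : Finset (Ideal (𝓞 K)) := (NKfinite K x).toFinset

lemma mem_Fx {x : ℝ} {I : Ideal (𝓞 K)} : I ∈ Fx K x ↔ I ≠ 0 ∧ (absNorm I : ℝ) ≤ x := by
  simp [Fx, NKfinite, Set.Finite.mem_toFinset]

lemma NKcount_eq_card (x : ℝ) : NKcount K x = (Fx K x).card := by
  rw [NKcount, Fx, Set.ncard_eq_toFinset_card _ (NKfinite K x)]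

lemma absNorm_pos' {I : Ideal (𝓞 K)} (hI : I ≠ 0) : 0 < absNorm I := by
  rw [Nat.pos_iff_ne_zero, ne_eq, Ideal.absNorm_eq_zero_iff]
  exact hI

lemma one_le_absNorm {I : Ideal (𝓞 K)} (hI : I ≠ 0) : (1 : ℝ) ≤ (absNorm I : ℝ) := by
  exact_mod_cast Nat.one_le_iff_ne_zero.mpr (Nat.pos_iff_ne_zero.mp (absNorm_pos' K hI))

lemma prod_primes_ne_zero {Q : Finset (Ideal (𝓞 K))} (hQ : ∀ p ∈ Q, Prime p) :
    (∏ p ∈ Q, p) ≠ 0 := by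
  exact Finset.prod_ne_zero_iff.mpr fun p hp => (hQ p hp).ne_zero

lemma prod_primes_injective {Q₁ Q₂ : Finset (Ideal (𝓞 K))} (h₁ : ∀ p ∈ Q₁, Prime p)
    (h₂ : ∀ p ∈ Q₂, Prime p) (h : (∏ p ∈ Q₁, p) = ∏ p ∈ Q₂, p) : Q₁ = Q₂ := by
  have hprod : Q₁.val.prod = Q₂.val.prod := by
    simpa only [Finset.prod_eq_multiset_prod, Multiset.map_id'] using h
  have := prime_factors_unique (f := Q₁.val) (g := Q₂.val) h₁ h₂
    (associated_iff_eq.mpr hprod)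
  have h2 : Multiset.Rel (fun a b => a = b) Q₁.val Q₂.val := by
    refine Multiset.Rel.mono this fun a _ b _ hab => associated_iff_eq.mp hab
  exact Finset.val_injective (Multiset.rel_eq.mp h2)

/-- divisibility by a product of distinct primes -/
lemma prod_primes_dvd_iff {Q : Finset (Ideal (𝓞 K))} (hQ : ∀ p ∈ Q, Prime p)
    {a : Ideal (𝓞 K)} : (∏ p ∈ Q, p) ∣ a ↔ ∀ p ∈ Q, a ≤ p := by
  constructor
  · intro h p hp
    exact (Ideal.dvd_iff_le).mp (dvd_trans (Finset.dvd_prod_of_mem (fun p => p) hp) h)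
  · intro h
    exact Finset.prod_primes_dvd a hQ fun p hp => (Ideal.dvd_iff_le).mpr (h p hp)

/-- Möbius-type indicator identity over subsets of a finite set of primes. -/
lemma moebius_indicator {s : Ideal (𝓞 K)} (hs : s ≠ 0) {P : Finset (Ideal (𝓞 K))}
    (hP : ∀ p ∈ P, Prime p) (hcover : ∀ p, Prime p → s ≤ p → p ∈ P) :
    ∑ Q ∈ P.powerset, (-1 : ℝ) ^ Q.card * (if ∀ p ∈ Q, s ≤ p then 1 else 0)
      = if s = ⊤ then 1 else 0 := by
  classical
  set D := P.filter (fun p => s ≤ p) with hD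
  have key : ∀ Q ∈ P.powerset, ((-1 : ℝ) ^ Q.card * (if ∀ p ∈ Q, s ≤ p then 1 else 0))
      = if Q ∈ D.powerset then (-1 : ℝ) ^ Q.card else 0 := by
    intro Q hQ
    rw [Finset.mem_powerset] at hQ
    by_cases h : ∀ p ∈ Q, s ≤ p
    · rw [if_pos h, if_pos, mul_one]
      rw [Finset.mem_powerset]
      intro p hp
      exact Finset.mem_filter.mpr ⟨hQ hp, h p hp⟩
    · rw [if_neg h, if_neg, mul_zero]
      rw [Finset.mem_powerset]
      intro hQD
      exact h fun p hp => (Finset.mem_filter.mp (hQD hp)).2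
  rw [Finset.sum_congr rfl key, ← Finset.sum_filter]
  have hPD : P.powerset.filter (fun Q => Q ∈ D.powerset) = D.powerset := by
    ext Q
    simp only [Finset.mem_filter, Finset.mem_powerset, and_iff_right_iff_imp]
    intro hQD
    exact hQD.trans (Finset.filter_subset _ _)
  rw [hPD]
  have hz : ∑ Q ∈ D.powerset, (-1:ℝ)^Q.card = if D = ∅ then 1 else 0 := by
    have hzz := Finset.sum_powerset_neg_one_pow_card (x := D)
    calc ∑ Q ∈ D.powerset, (-1:ℝ)^Q.card
        = ((∑ Q ∈ D.powerset, (-1:ℤ)^Q.card : ℤ) : ℝ) := by push_cast; rfl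
      _ = _ := by rw [hzz]; split_ifs <;> simp
  rw [hz]
  congr 1
  simp only [eq_iff_iff]
  constructor
  · intro hDe
    by_contra hstop
    obtain ⟨M, hM, hsM⟩ := Ideal.exists_le_maximal s hstop
    have hM0 : M ≠ ⊥ := by
      intro h0; rw [h0] at hsM; exact hs (le_bot_iff.mp hsM)
    have hMp : Prime M := (Ideal.prime_iff_isPrime hM0).mpr hM.isPrime
    have : M ∈ D := Finset.mem_filter.mpr ⟨hcover M hMp hsM, hsM⟩
    rw [hDe] at this; exact absurd this (Finset.notMem_empty M)
  · intro htop
    rw [Finset.eq_empty_iff_forall_notMem]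
    intro p hp
    rw [Finset.mem_filter] at hp
    have hpP := hP p hp.1
    have : p = ⊤ := top_le_iff.mp (htop ▸ hp.2)
    exact hpP.not_unit (this ▸ Ideal.isUnit_iff.mpr rfl)

lemma filter_dvd_card {c : Ideal (𝓞 K)} (hc : c ≠ 0) (x : ℝ) :
    ((Fx K x).filter (fun a => c ∣ a)).card = NKcount K (x / (absNorm c : ℝ)) := by
  classical
  rw [NKcount_eq_card]
  have hcpos : (0:ℝ) < (absNorm c : ℝ) := by exact_mod_cast absNorm_pos' K hc
  refine (Finset.card_bij (fun b _ => c * b) ?_ ?_ ?_).symm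
  · intro b hb
    rw [mem_Fx] at hb
    rw [Finset.mem_filter, mem_Fx]
    refine ⟨⟨mul_ne_zero hc hb.1, ?_⟩, Dvd.intro _ rfl⟩
    rw [_root_.map_mul]
    push_cast
    calc ((absNorm c : ℝ)) * (absNorm b : ℝ) ≤ (absNorm c : ℝ) * (x / (absNorm c : ℝ)) := by
          exact mul_le_mul_of_nonneg_left hb.2 hcpos.le
      _ = x := by field_simp
  · intro b₁ h₁ b₂ h₂ h
    exact mul_left_cancel₀ hc h
  · intro a ha
    rw [Finset.mem_filter, mem_Fx] at ha
    obtain ⟨⟨ha0, hax⟩, b, rfl⟩ := ha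
    refine ⟨b, ?_, rfl⟩
    rw [mem_Fx]
    have hb0 : b ≠ 0 := by rintro rfl; simp at ha0
    refine ⟨hb0, ?_⟩
    rw [le_div_iff₀ hcpos, mul_comm]
    rw [_root_.map_mul] at hax
    exact_mod_cast hax

noncomputable def Px (x : ℝ) : Finset (Ideal (𝓞 K)) := (Fx K x).filter (fun p => Prime p)

lemma mem_Px {x : ℝ} {p : Ideal (𝓞 K)} :
    p ∈ Px K x ↔ Prime p ∧ (absNorm p : ℝ) ≤ x := by
  rw [Px, Finset.mem_filter, mem_Fx]
  constructor
  · rintro ⟨⟨h0, hle⟩, hp⟩; exact ⟨hp, hle⟩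
  · rintro ⟨hp, hle⟩; exact ⟨⟨hp.ne_zero, hle⟩, hp⟩

lemma counting_identity (m : ℕ) (hm : 1 ≤ m) (x : ℝ) :
    (((Fintype.piFinset (fun _ : Fin m => Fx K x)).filter
        (fun f => (⨆ i, f i) = ⊤)).card : ℝ)
      = ∑ Q ∈ (Px K x).powerset,
          (-1:ℝ)^Q.card * (NKcount K (x / (absNorm (∏ p ∈ Q, p) : ℝ)) : ℝ)^m := by
  classical
  rw [Finset.card_filter]
  push_cast
  have step1 : ∀ f ∈ Fintype.piFinset (fun _ : Fin m => Fx K x),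
      (if (⨆ i, f i) = ⊤ then (1:ℝ) else 0)
        = ∑ Q ∈ (Px K x).powerset, (-1:ℝ)^Q.card * (if ∀ p ∈ Q, (⨆ i, f i) ≤ p then 1 else 0) := by
    intro f hf
    rw [Fintype.mem_piFinset] at hf
    have i₀ : Fin m := ⟨0, hm⟩
    have hf0 : f i₀ ≠ 0 := ((mem_Fx K).mp (hf i₀)).1
    refine (moebius_indicator K ?_ ?_ ?_).symm
    · intro h0
      apply hf0
      have hle := le_iSup f i₀
      rw [h0, Submodule.zero_eq_bot] at hle
      exact le_bot_iff.mp hle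
    · intro p hp; exact ((mem_Px K).mp hp).1
    · intro p hp hsp
      rw [mem_Px]
      refine ⟨hp, ?_⟩
      have h1 : f i₀ ≤ p := le_trans (le_iSup f i₀) hsp
      have h2 : absNorm p ∣ absNorm (f i₀) := absNorm_dvd_absNorm_of_le h1
      have h3 : (absNorm p : ℝ) ≤ (absNorm (f i₀) : ℝ) := by
        exact_mod_cast Nat.le_of_dvd (absNorm_pos' K hf0) h2
      exact h3.trans ((mem_Fx K).mp (hf i₀)).2
  rw [Finset.sum_congr rfl step1, Finset.sum_comm]
  refine Finset.sum_congr rfl ?_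
  intro Q hQ
  rw [Finset.mem_powerset] at hQ
  have hQp : ∀ p ∈ Q, Prime p := fun p hp => ((mem_Px K).mp (hQ hp)).1
  have hQ0 : (∏ p ∈ Q, p) ≠ 0 := prod_primes_ne_zero K hQp
  rw [← Finset.mul_sum]
  congr 1
  have cond : ∀ f : Fin m → Ideal (𝓞 K),
      (∀ p ∈ Q, (⨆ i, f i) ≤ p) ↔ ∀ i, (∏ p ∈ Q, p) ∣ f i := by
    intro f
    simp only [iSup_le_iff, prod_primes_dvd_iff K hQp]
    exact ⟨fun h i p hp => h p hp i, fun h p hp i => h i p hp⟩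
  have : ∀ f : Fin m → Ideal (𝓞 K), (if ∀ p ∈ Q, (⨆ i, f i) ≤ p then (1:ℝ) else 0)
      = ∏ i : Fin m, (if (∏ p ∈ Q, p) ∣ f i then (1:ℝ) else 0) := by
    intro f
    by_cases hcond : ∀ i, (∏ p ∈ Q, p) ∣ f i
    · rw [if_pos ((cond f).mpr hcond)]
      exact (Finset.prod_eq_one (fun i _ => if_pos (hcond i))).symm
    · rw [if_neg (fun hh => hcond ((cond f).mp hh))]
      obtain ⟨i, hi⟩ := not_forall.mp hcond
      have : (if (∏ p ∈ Q, p) ∣ f i then (1:ℝ) else 0) = 0 := if_neg hi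
      exact (Finset.prod_eq_zero (Finset.mem_univ i) this).symm
  rw [Finset.sum_congr rfl (fun f _ => this f)]
  have hps := Finset.prod_univ_sum (fun _ : Fin m => Fx K x)
    (fun _ a => if (∏ p ∈ Q, p) ∣ a then (1:ℝ) else 0)
  rw [← hps]
  have hcard : ∑ a ∈ Fx K x, (if (∏ p ∈ Q, p) ∣ a then (1:ℝ) else 0)
      = (NKcount K (x / (absNorm (∏ p ∈ Q, p) : ℝ)) : ℝ) := by
    rw [← filter_dvd_card K hQ0 x, Finset.card_filter]
    push_cast
    rfl
  rw [Finset.prod_congr rfl (fun i _ => hcard), Finset.prod_const, Finset.card_univ,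
    Fintype.card_fin]

lemma dyadic_tail (Cl : ℝ) (hCl : 0 < Cl)
    (hA : ∀ y : ℝ, 1 ≤ y → (NKcount K y : ℝ) ≤ Cl * y) (s : ℝ) (hs : 1 < s) :
    ∃ C : ℝ, 0 < C ∧ ∀ x : ℝ, 1 ≤ x → ∀ G : Finset (Ideal (𝓞 K)),
      (∀ I ∈ G, I ≠ 0 ∧ x ≤ (absNorm I : ℝ)) →
      ∑ I ∈ G, ((absNorm I : ℝ)) ^ (-s) ≤ C * x ^ (1 - s) := by
  classical
  set r : ℝ := (2:ℝ) ^ (1 - s) with hr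
  have hr0 : 0 < r := Real.rpow_pos_of_pos two_pos _
  have hr1 : r < 1 := Real.rpow_lt_one_of_one_lt_of_neg one_lt_two (by linarith)
  have hgeom : ∑' (n : ℕ), r ^ n = (1 - r)⁻¹ := tsum_geometric_of_lt_one hr0.le hr1
  have h2s : (0:ℝ) < (2:ℝ) ^ (s - 1) := Real.rpow_pos_of_pos two_pos _
  have h1r : (0:ℝ) < (1 - r)⁻¹ := inv_pos.mpr (by linarith)
  refine ⟨2 * Cl * ((2:ℝ) ^ (s - 1)) * (1 - r)⁻¹, by positivity, ?_⟩
  intro x hx G hG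
  have hpow2 : ∀ k : ℕ, ((2:ℝ) ^ (k:ℕ)) ^ (-s) = r ^ k / (2:ℝ)^(k:ℕ) := by
    intro k
    rw [← Real.rpow_natCast (2:ℝ) k, ← Real.rpow_mul two_pos.le, ← Real.rpow_natCast r k, hr,
      ← Real.rpow_mul two_pos.le, ← Real.rpow_sub two_pos]
    ring_nf
  -- fiberwise decomposition
  have hmaps : ∀ I ∈ G, Nat.log 2 (absNorm I) ∈ G.image (fun I => Nat.log 2 (absNorm I)) :=
    fun I hI => Finset.mem_image_of_mem _ hI
  rw [← Finset.sum_fiberwise_of_maps_to hmaps (fun I => ((absNorm I : ℝ)) ^ (-s))]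
  set J := G.image (fun I => Nat.log 2 (absNorm I)) with hJ
  have inner : ∀ k ∈ J,
      ∑ I ∈ G.filter (fun I => Nat.log 2 (absNorm I) = k), ((absNorm I : ℝ)) ^ (-s)
        ≤ (2 * Cl) * r ^ k := by
    intro k _
    have hterm : ∀ I ∈ G.filter (fun I => Nat.log 2 (absNorm I) = k),
        ((absNorm I : ℝ)) ^ (-s) ≤ ((2:ℝ) ^ (k:ℕ)) ^ (-s) := by
      intro I hI
      rw [Finset.mem_filter] at hI
      obtain ⟨hIG, hlog⟩ := hI
      have hN0 : absNorm I ≠ 0 := Nat.pos_iff_ne_zero.mp (absNorm_pos' K (hG I hIG).1)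
      have h2k : (2:ℕ) ^ k ≤ absNorm I := by
        rw [← hlog]; exact Nat.pow_log_le_self 2 hN0
      have : ((2:ℝ)) ^ (k:ℕ) ≤ (absNorm I : ℝ) := by exact_mod_cast h2k
      exact Real.rpow_le_rpow_of_nonpos (by positivity) this (by linarith)
    calc ∑ I ∈ G.filter (fun I => Nat.log 2 (absNorm I) = k), ((absNorm I : ℝ)) ^ (-s)
        ≤ ∑ _I ∈ G.filter (fun I => Nat.log 2 (absNorm I) = k), ((2:ℝ) ^ (k:ℕ)) ^ (-s) :=
          Finset.sum_le_sum hterm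
      _ = ((G.filter (fun I => Nat.log 2 (absNorm I) = k)).card : ℝ) * ((2:ℝ) ^ (k:ℕ)) ^ (-s) := by
          rw [Finset.sum_const, nsmul_eq_mul]
      _ ≤ (Cl * (2:ℝ) ^ (k+1:ℕ)) * ((2:ℝ) ^ (k:ℕ)) ^ (-s) := by
          refine mul_le_mul_of_nonneg_right ?_ (by positivity)
          have hsub : G.filter (fun I => Nat.log 2 (absNorm I) = k) ⊆ Fx K ((2:ℝ) ^ (k+1:ℕ)) := by
            intro I hI
            rw [Finset.mem_filter] at hI
            obtain ⟨hIG, hlog⟩ := hI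
            rw [mem_Fx]
            refine ⟨(hG I hIG).1, ?_⟩
            have : absNorm I < 2 ^ (k+1) := by
              rw [← hlog]; exact Nat.lt_pow_succ_log_self one_lt_two _
            have := (Nat.cast_lt (α := ℝ)).mpr this
            push_cast at this ⊢
            linarith
          have hcard : ((G.filter (fun I => Nat.log 2 (absNorm I) = k)).card : ℝ)
              ≤ (NKcount K ((2:ℝ) ^ (k+1:ℕ)) : ℝ) := by
            rw [NKcount_eq_card]
            exact_mod_cast Finset.card_le_card hsub
          refine hcard.trans (hA _ ?_)
          exact one_le_pow₀ one_le_two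
      _ = (2 * Cl) * r ^ k := by
          rw [hpow2 k]
          rw [pow_succ]
          field_simp
  calc ∑ k ∈ J, ∑ I ∈ G.filter (fun I => Nat.log 2 (absNorm I) = k), ((absNorm I : ℝ)) ^ (-s)
      ≤ ∑ k ∈ J, (2 * Cl) * r ^ k := Finset.sum_le_sum inner
    _ = (2 * Cl) * ∑ k ∈ J, r ^ k := by rw [Finset.mul_sum]
    _ ≤ (2 * Cl) * ((2:ℝ) ^ (s-1) * x ^ (1-s) * (1 - r)⁻¹) := by
        refine mul_le_mul_of_nonneg_left ?_ (by positivity)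
        rcases Finset.eq_empty_or_nonempty J with hJe | hJne
        · rw [hJe, Finset.sum_empty]
          have hx1s : (0:ℝ) < x ^ (1-s) := Real.rpow_pos_of_pos (by linarith) _
          positivity
        · set k₀ := J.min' hJne with hk₀
          have hk₀J : k₀ ∈ J := J.min'_mem hJne
          -- r ^ k₀ ≤ 2^(s-1) * x^(1-s)
          have hrk₀ : r ^ k₀ ≤ (2:ℝ) ^ (s-1) * x ^ (1-s) := by
            obtain ⟨I, hIG, hI⟩ := Finset.mem_image.mp hk₀J
            have hxI : x ≤ (absNorm I : ℝ) := (hG I hIG).2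
            have hIlt : absNorm I < 2 ^ (k₀+1) := by
              rw [← hI]; exact Nat.lt_pow_succ_log_self one_lt_two _
            have hxlt : x < (2:ℝ) ^ (k₀+1:ℕ) := by
              have := (Nat.cast_lt (α := ℝ)).mpr hIlt
              push_cast at this
              push_cast
              linarith
            have hhalf : x / 2 < (2:ℝ) ^ (k₀:ℕ) := by
              rw [div_lt_iff₀ two_pos, mul_comm]
              calc x < (2:ℝ) ^ (k₀+1:ℕ) := hxlt
                _ = 2 * (2:ℝ) ^ (k₀:ℕ) := by ring
            have hx20 : (0:ℝ) < x / 2 := by linarith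
            have : ((2:ℝ) ^ (k₀:ℕ)) ^ (1-s) ≤ (x/2) ^ (1-s) :=
              Real.rpow_le_rpow_of_nonpos hx20 hhalf.le (by linarith)
            have hrk : r ^ k₀ = ((2:ℝ) ^ (k₀:ℕ)) ^ (1-s) := by
              rw [← Real.rpow_natCast (2:ℝ) k₀, ← Real.rpow_mul two_pos.le, hr,
                ← Real.rpow_natCast r k₀, hr, ← Real.rpow_mul two_pos.le, mul_comm]
            rw [hrk]
            refine this.trans ?_
            rw [Real.div_rpow (by linarith) two_pos.le]
            rw [div_eq_mul_inv, ← Real.rpow_neg two_pos.le]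
            rw [mul_comm]
            have : -(1-s) = s - 1 := by ring
            rw [this]
          have hsumtail : ∑ k ∈ J, r ^ k ≤ r ^ k₀ * (1 - r)⁻¹ := by
            have hdec : ∀ k ∈ J, r ^ k = r ^ k₀ * r ^ (k - k₀) := by
              intro k hk
              rw [← pow_add]
              congr 1
              have : k₀ ≤ k := J.min'_le k hk
              omega
            rw [Finset.sum_congr rfl hdec, ← Finset.mul_sum]
            refine mul_le_mul_of_nonneg_left ?_ (by positivity)
            have hinj : Set.InjOn (fun k => k - k₀) J := by
              intro k1 h1 k2 h2 h
              have g1 : k₀ ≤ k1 := J.min'_le k1 h1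
              have g2 : k₀ ≤ k2 := J.min'_le k2 h2
              simp only at h
              omega
            rw [← Finset.sum_image (f := fun j => r ^ j) (g := fun k => k - k₀) hinj]
            calc ∑ j ∈ J.image (fun k => k - k₀), r ^ j
                ≤ ∑' (n : ℕ), r ^ n :=
                  Summable.sum_le_tsum _ (fun i _ => by positivity)
                    (summable_geometric_of_lt_one hr0.le hr1)
              _ = (1 - r)⁻¹ := hgeom
          refine hsumtail.trans ?_
          refine mul_le_mul_of_nonneg_right hrk₀ ?_
          rw [inv_nonneg]
          linarith
    _ = 2 * Cl * ((2:ℝ) ^ (s - 1)) * (1 - r)⁻¹ * x ^ (1-s) := by ring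

open UniqueFactorizationMonoid in
/-- The finset of prime (ideal) factors. -/
noncomputable def pf (a : Ideal (𝓞 K)) : Finset (Ideal (𝓞 K)) :=
  (UniqueFactorizationMonoid.factors a).toFinset

lemma mem_pf {a p : Ideal (𝓞 K)} (ha : a ≠ 0) : p ∈ pf K a ↔ Prime p ∧ p ∣ a := by
  rw [pf, Multiset.mem_toFinset]
  constructor
  · intro hp
    exact ⟨UniqueFactorizationMonoid.prime_of_factor p hp,
      UniqueFactorizationMonoid.dvd_of_mem_factors hp⟩
  · rintro ⟨hp, hdvd⟩
    obtain ⟨q, hq, hassoc⟩ :=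
      UniqueFactorizationMonoid.exists_mem_factors_of_dvd ha hp.irreducible hdvd
    rwa [associated_iff_eq.mp hassoc]

/-- nonzero ideals -/
abbrev Jt := {I : Ideal (𝓞 K) // I ≠ 0}

/-- admissible finsets of primes -/
abbrev AQ := {Q : Finset (Ideal (𝓞 K)) // ∀ p ∈ Q, Prime p}

lemma summable_norm_rpow (Cl : ℝ) (hCl : 0 < Cl)
    (hA : ∀ y : ℝ, 1 ≤ y → (NKcount K y : ℝ) ≤ Cl * y) (s : ℝ) (hs : 1 < s) :
    Summable (fun I : Jt K => ((absNorm I.1 : ℝ)) ^ (-s)) := by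
  obtain ⟨C, hC0, hC⟩ := dyadic_tail K Cl hCl hA s hs
  refine summable_of_sum_le (c := C) (fun I => by positivity) ?_
  intro u
  have himg : ∑ I ∈ u, ((absNorm I.1 : ℝ)) ^ (-s)
      = ∑ J ∈ u.image Subtype.val, ((absNorm J : ℝ)) ^ (-s) := by
    rw [Finset.sum_image (fun a _ b _ h => Subtype.ext h)]
  rw [himg]
  have := hC 1 le_rfl (u.image Subtype.val) ?_
  · simpa using this
  · intro J hJ
    obtain ⟨I, _, rfl⟩ := Finset.mem_image.mp hJ
    exact ⟨I.2, one_le_absNorm K I.2⟩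

/-- the product-of-primes map, as a map into nonzero ideals -/
noncomputable def prodQ (Q : AQ K) : Jt K := ⟨∏ p ∈ Q.1, p, prod_primes_ne_zero K Q.2⟩

lemma prodQ_injective : Function.Injective (prodQ K) := by
  intro Q₁ Q₂ h
  have := congrArg Subtype.val h
  exact Subtype.ext (prod_primes_injective K Q₁.2 Q₂.2 this)

/-- the Möbius-like weight -/
noncomputable def wgt (s : ℝ) (Q : AQ K) : ℝ :=
  (-1:ℝ) ^ Q.1.card * ((absNorm (prodQ K Q).1 : ℝ)) ^ (-s)

lemma abs_wgt (s : ℝ) (Q : AQ K) :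
    |wgt K s Q| = ((absNorm (prodQ K Q).1 : ℝ)) ^ (-s) := by
  rw [wgt, abs_mul, abs_pow, abs_neg, abs_one, one_pow, one_mul,
    abs_of_pos (Real.rpow_pos_of_pos (by exact_mod_cast absNorm_pos' K (prodQ K Q).2) _)]

lemma summable_wgt (Cl : ℝ) (hCl : 0 < Cl)
    (hA : ∀ y : ℝ, 1 ≤ y → (NKcount K y : ℝ) ≤ Cl * y) (s : ℝ) (hs : 1 < s) :
    Summable (wgt K s) := by
  refine Summable.of_abs ?_
  have : (fun Q => |wgt K s Q|)
      = (fun I : Jt K => ((absNorm I.1 : ℝ)) ^ (-s)) ∘ (prodQ K) := by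
    funext Q; exact abs_wgt K s Q
  rw [this]
  exact (summable_norm_rpow K Cl hCl hA s hs).comp_injective (prodQ_injective K)

noncomputable def gmap (s : ℝ) : Jt K × AQ K → Jt K :=
  fun p => ⟨p.1.1 * (prodQ K p.2).1, mul_ne_zero p.1.2 (prodQ K p.2).2⟩

lemma hterm_eq (s : ℝ) (p : Jt K × AQ K) :
    ((absNorm p.1.1 : ℝ)) ^ (-s) * wgt K s p.2
      = (-1:ℝ) ^ p.2.1.card * ((absNorm (gmap K s p).1 : ℝ)) ^ (-s) := by
  rw [wgt, gmap]
  simp only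
  rw [_root_.map_mul]
  push_cast
  rw [Real.mul_rpow (by positivity) (by positivity)]
  ring

/-- fiber of `gmap` over `a` is in bijection with the powerset of prime factors of `a` -/
noncomputable def fiberBij (s : ℝ) (a : Jt K) :
    {p : Jt K × AQ K // gmap K s p = a} → {Q : Finset (Ideal (𝓞 K)) // Q ∈ (pf K a.1).powerset} :=
  fun p => ⟨p.1.2.1, by
    rw [Finset.mem_powerset]
    intro q hq
    rw [mem_pf K a.2]
    refine ⟨p.1.2.2 q hq, ?_⟩
    have h1 : q ∣ (prodQ K p.1.2).1 := Finset.dvd_prod_of_mem (fun p => p) hq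
    have h2 : (prodQ K p.1.2).1 ∣ a.1 := by
      rw [← congrArg Subtype.val p.2]
      exact Dvd.intro_left _ rfl
    exact h1.trans h2⟩

lemma fiberBij_bijective (s : ℝ) (a : Jt K) : Function.Bijective (fiberBij K s a) := by
  constructor
  · rintro ⟨⟨I₁, Q₁⟩, h₁⟩ ⟨⟨I₂, Q₂⟩, h₂⟩ h
    have hQv : Q₁.1 = Q₂.1 := by
      have := congrArg Subtype.val h
      simpa [fiberBij] using this
    have hQ : Q₁ = Q₂ := Subtype.ext hQv
    subst hQ
    have hI : I₁ = I₂ := by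
      have e₁ := congrArg Subtype.val h₁
      have e₂ := congrArg Subtype.val h₂
      simp only [gmap] at e₁ e₂
      refine Subtype.ext (mul_right_cancel₀ (prodQ K Q₁).2 ?_)
      rw [e₁, ← e₂]
    subst hI
    rfl
  · rintro ⟨Q, hQ⟩
    rw [Finset.mem_powerset] at hQ
    have hQp : ∀ p ∈ Q, Prime p := fun p hp => ((mem_pf K a.2).mp (hQ hp)).1
    have hdvd : (∏ p ∈ Q, p) ∣ a.1 :=
      Finset.prod_primes_dvd a.1 hQp (fun p hp => ((mem_pf K a.2).mp (hQ hp)).2)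
    obtain ⟨I, hI⟩ := hdvd
    have hI0 : I ≠ 0 := by
      intro h0; rw [h0, mul_zero] at hI; exact a.2 hI
    refine ⟨⟨(⟨I, hI0⟩, ⟨Q, hQp⟩), ?_⟩, rfl⟩
    apply Subtype.ext
    simp only [gmap, prodQ]
    rw [mul_comm, ← hI]

lemma zeta_mul_S (Cl : ℝ) (hCl : 0 < Cl)
    (hA : ∀ y : ℝ, 1 ≤ y → (NKcount K y : ℝ) ≤ Cl * y) (s : ℝ) (hs : 1 < s) :
    (∑' I : Jt K, ((absNorm I.1 : ℝ)) ^ (-s)) * (∑' Q : AQ K, wgt K s Q) = 1 := by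
  have hF : Summable (fun I : Jt K => ((absNorm I.1 : ℝ)) ^ (-s)) :=
    summable_norm_rpow K Cl hCl hA s hs
  have hW : Summable (wgt K s) := summable_wgt K Cl hCl hA s hs
  have habs : (fun p : Jt K × AQ K => |((absNorm p.1.1 : ℝ)) ^ (-s) * wgt K s p.2|)
      = fun p : Jt K × AQ K =>
        ((absNorm p.1.1 : ℝ)) ^ (-s) * |wgt K s p.2| := by
    funext p
    rw [abs_mul, abs_of_pos]
    exact Real.rpow_pos_of_pos (by exact_mod_cast absNorm_pos' K p.1.2) _
  have hFW : Summable (fun p : Jt K × AQ K => ((absNorm p.1.1 : ℝ)) ^ (-s) * wgt K s p.2) := by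
    refine Summable.of_abs ?_
    rw [habs]
    exact hF.mul_of_nonneg hW.abs (fun I => by positivity) (fun Q => abs_nonneg _)
  rw [Summable.tsum_mul_tsum hF hW hFW]
  -- regroup along fibers of gmap
  set h : Jt K × AQ K → ℝ := fun p => ((absNorm p.1.1 : ℝ)) ^ (-s) * wgt K s p.2 with hh
  set e := Equiv.sigmaFiberEquiv (gmap K s) with he
  have hsig : Summable (fun σ : Σ a : Jt K, {p // gmap K s p = a} => h (e σ)) :=
    (e.summable_iff (f := h)).mpr hFW
  have h1 : ∑' (z : Jt K × AQ K), h z = ∑' (σ : Σ a : Jt K, {p // gmap K s p = a}), h (e σ) :=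
    (Equiv.tsum_eq e h).symm
  rw [h1, Summable.tsum_sigma hsig]
  -- inner sums
  have inner : ∀ a : Jt K, (∑' (p : {p // gmap K s p = a}), h (e ⟨a, p⟩))
      = (if a.1 = ⊤ then 1 else 0) * ((absNorm a.1 : ℝ)) ^ (-s) := by
    intro a
    have hptw : ∀ p : {p // gmap K s p = a},
        h (e ⟨a, p⟩) = (-1:ℝ) ^ ((p.1.2.1)).card * ((absNorm a.1 : ℝ)) ^ (-s) := by
      intro p
      have h0 : h (e ⟨a, p⟩) = h p.1 := by rw [he]; rfl
      rw [h0, hh]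
      show ((absNorm p.1.1.1 : ℝ)) ^ (-s) * wgt K s p.1.2 = _
      rw [hterm_eq K s p.1, p.2]
    rw [tsum_congr hptw]
    have h2 : ∑' (p : {p // gmap K s p = a}),
        (-1:ℝ) ^ ((p.1.2.1)).card * ((absNorm a.1 : ℝ)) ^ (-s)
        = ∑' (Q : {Q : Finset (Ideal (𝓞 K)) // Q ∈ (pf K a.1).powerset}),
            (-1:ℝ) ^ (Q.1).card * ((absNorm a.1 : ℝ)) ^ (-s) := by
      rw [← Equiv.tsum_eq (Equiv.ofBijective _ (fiberBij_bijective K s a))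
        (fun Q : {Q : Finset (Ideal (𝓞 K)) // Q ∈ (pf K a.1).powerset} =>
          (-1:ℝ) ^ (Q.1).card * ((absNorm a.1 : ℝ)) ^ (-s))]
      exact tsum_congr (fun p => rfl)
    rw [h2, Finset.tsum_subtype ((pf K a.1).powerset)
      (fun Q => (-1:ℝ) ^ Q.card * ((absNorm a.1 : ℝ)) ^ (-s)), ← Finset.sum_mul]
    congr 1
    -- Möbius sum
    have hmob := moebius_indicator K a.2 (P := pf K a.1)
      (fun p hp => ((mem_pf K a.2).mp hp).1)
      (fun p hp hap => (mem_pf K a.2).mpr ⟨hp, Ideal.dvd_iff_le.mpr hap⟩)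
    rw [← hmob]
    refine Finset.sum_congr rfl ?_
    intro Q hQ
    rw [Finset.mem_powerset] at hQ
    rw [if_pos, mul_one]
    intro p hp
    exact Ideal.dvd_iff_le.mp ((mem_pf K a.2).mp (hQ hp)).2
  rw [tsum_congr inner]
  have hne : (⊤ : Ideal (𝓞 K)) ≠ 0 := by
    rw [Submodule.zero_eq_bot]; exact top_ne_bot
  rw [tsum_eq_single (⟨⊤, hne⟩ : Jt K) ?_]
  · rw [if_pos rfl, one_mul]
    have : absNorm (⊤ : Ideal (𝓞 K)) = 1 := absNorm_eq_one_iff.mpr rfl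
    rw [this]
    push_cast
    exact Real.one_rpow _
  · intro b hb
    have hbne : b.1 ≠ ⊤ := fun hh' => hb (Subtype.ext hh')
    rw [if_neg hbne, zero_mul]

lemma NKcount_mono {x y : ℝ} (h : x ≤ y) : NKcount K x ≤ NKcount K y := by
  rw [NKcount_eq_card, NKcount_eq_card]
  refine Finset.card_le_card ?_
  intro I hI
  rw [mem_Fx] at hI ⊢
  exact ⟨hI.1, hI.2.trans h⟩

lemma NKcount_eq_zero {y : ℝ} (h : y < 1) : NKcount K y = 0 := by
  rw [NKcount_eq_card, Finset.card_eq_zero, Finset.eq_empty_iff_forall_notMem]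
  intro I hI
  rw [mem_Fx] at hI
  exact absurd (one_le_absNorm K hI.1) (by linarith [hI.2])

lemma ncard_tuples (m : ℕ) (x : ℝ) :
    Set.ncard {f : Fin m → Ideal (𝓞 K) |
        (∀ i, f i ≠ 0 ∧ (absNorm (f i) : ℝ) ≤ x) ∧ (⨆ i, f i) = ⊤}
      = (((Fintype.piFinset (fun _ : Fin m => Fx K x)).filter
          (fun f => (⨆ i, f i) = ⊤)).card) := by
  classical
  rw [← Set.ncard_coe_finset]
  congr 1
  ext f
  simp only [Finset.coe_filter, Set.mem_setOf_eq, Fintype.mem_piFinset, mem_Fx]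


end Aux

/-- If `N_K(y) = ρ_K y + O(y^{1-θ})` with `θ ∈ (0,1)`, then for every `m ≥ 2` the number of
`m`-tuples of jointly coprime nonzero ideals, each of norm at most `x`, equals
`N_K(x)^m / ζ_K(m) + O_{K,m,ε}(x^{m-θ+ε})`. -/
theorem coprime_tuple_count_asymptotic (K : Type) [Field K] [NumberField K]
    (θ ρ : ℝ) (hθ0 : 0 < θ) (hθ1 : θ < 1)
    (hNK : (fun y : ℝ => (NKcount K y : ℝ) - ρ * y) =O[atTop] fun y : ℝ => y ^ (1 - θ)) :
    ∀ m : ℕ, 2 ≤ m → ∀ ε : ℝ, 0 < ε →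
      (fun x : ℝ =>
          (Set.ncard {f : Fin m → Ideal (𝓞 K) |
              (∀ i, f i ≠ 0 ∧ (absNorm (f i) : ℝ) ≤ x) ∧ (⨆ i, f i) = ⊤} : ℝ)
            - (NKcount K x : ℝ) ^ m / zetaK K m)
        =O[atTop] fun x : ℝ => x ^ ((m : ℝ) - θ + ε) := by
  intro m hm ε hε
  classical
  -- Step A : eventual bound
  rw [Asymptotics.isBigO_iff] at hNK
  obtain ⟨c₀, hc₀⟩ := hNK
  rw [Filter.eventually_atTop] at hc₀
  obtain ⟨b, hb⟩ := hc₀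
  set x₀ : ℝ := max b 1 with hx₀
  have hx₀1 : (1:ℝ) ≤ x₀ := le_max_right _ _
  have hEbase : ∀ y : ℝ, x₀ ≤ y → |(NKcount K y : ℝ) - ρ * y| ≤ |c₀| * y ^ (1-θ) := by
    intro y hy
    have hy1 : (1:ℝ) ≤ y := hx₀1.trans hy
    have h1 := hb y ((le_max_left _ _).trans hy)
    rw [Real.norm_eq_abs, Real.norm_eq_abs] at h1
    have h2 : |y ^ (1-θ)| = y ^ (1-θ) := abs_of_pos (Real.rpow_pos_of_pos (by linarith) _)
    rw [h2] at h1
    refine h1.trans ?_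
    have : (0:ℝ) ≤ y ^ (1-θ) := (Real.rpow_pos_of_pos (by linarith) _).le
    exact mul_le_mul_of_nonneg_right (le_abs_self c₀) this
  -- Step B : global bound
  set B : ℝ := (NKcount K x₀ : ℝ) + |ρ| * x₀ with hB
  have hB0 : 0 ≤ B := by positivity
  set Cg : ℝ := max (max |c₀| |ρ|) B with hCg
  have hCg0 : 0 ≤ Cg := le_trans (abs_nonneg c₀) ((le_max_left _ _).trans (le_max_left _ _))
  have hEg : ∀ y : ℝ, 0 < y → |(NKcount K y : ℝ) - ρ * y| ≤ Cg * y ^ (1-θ) := by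
    intro y hy0
    have hrp : (0:ℝ) < y ^ (1-θ) := Real.rpow_pos_of_pos hy0 _
    rcases le_or_gt x₀ y with hy | hy
    · exact (hEbase y hy).trans (mul_le_mul_of_nonneg_right
        ((le_max_left _ _).trans (le_max_left _ _)) hrp.le)
    · rcases lt_or_ge y 1 with hy1 | hy1
      · rw [NKcount_eq_zero K hy1]
        have h3 : |(0:ℝ) - ρ * y| = |ρ| * y := by
          rw [zero_sub, abs_neg, abs_mul, abs_of_pos hy0]
        rw [Nat.cast_zero, h3]
        have h4 : y ≤ y ^ (1-θ) := by
          have h5 : y ^ (1:ℝ) ≤ y ^ (1-θ) :=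
            Real.rpow_le_rpow_of_exponent_ge hy0 hy1.le (by linarith)
          rwa [Real.rpow_one] at h5
        calc |ρ| * y ≤ |ρ| * y ^ (1-θ) := mul_le_mul_of_nonneg_left h4 (abs_nonneg _)
          _ ≤ Cg * y ^ (1-θ) := mul_le_mul_of_nonneg_right
              ((le_max_right _ _).trans (le_max_left _ _)) hrp.le
      · have habs : |(NKcount K y : ℝ) - ρ * y| ≤ (NKcount K y : ℝ) + |ρ * y| := by
          rw [sub_eq_add_neg]
          refine (abs_add_le _ _).trans ?_
          rw [abs_neg, Nat.abs_cast]
        have hmono : (NKcount K y : ℝ) ≤ (NKcount K x₀ : ℝ) := by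
          exact_mod_cast NKcount_mono K hy.le
        have h6 : |ρ * y| ≤ |ρ| * x₀ := by
          rw [abs_mul, abs_of_pos hy0]
          exact mul_le_mul_of_nonneg_left hy.le (abs_nonneg _)
        have h7 : (1:ℝ) ≤ y ^ (1-θ) := Real.one_le_rpow hy1 (by linarith)
        calc |(NKcount K y : ℝ) - ρ * y| ≤ B := by rw [hB]; linarith
          _ ≤ B * y ^ (1-θ) := le_mul_of_one_le_right hB0 h7
          _ ≤ Cg * y ^ (1-θ) := mul_le_mul_of_nonneg_right (le_max_right _ _) hrp.le
  -- Step C : linear growth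
  set Cl : ℝ := |ρ| + Cg + 1 with hCldef
  have hCl : 0 < Cl := by positivity
  have hlin : ∀ y : ℝ, 1 ≤ y → (NKcount K y : ℝ) ≤ Cl * y := by
    intro y hy1
    have hy0 : (0:ℝ) < y := by linarith
    have h1 := hEg y hy0
    have h2 : y ^ (1-θ) ≤ y := by
      have h3 : y ^ (1-θ) ≤ y ^ (1:ℝ) :=
        Real.rpow_le_rpow_of_exponent_le hy1 (by linarith)
      rwa [Real.rpow_one] at h3
    have h4 : (NKcount K y : ℝ) - ρ * y ≤ Cg * y ^ (1-θ) := (abs_le.mp h1).2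
    have h5 : ρ * y ≤ |ρ| * y := mul_le_mul_of_nonneg_right (le_abs_self ρ) hy0.le
    have h6 : Cg * y ^ (1-θ) ≤ Cg * y := mul_le_mul_of_nonneg_left h2 hCg0
    rw [hCldef]
    nlinarith
  -- Step D : power estimate
  set Cb : ℝ := Cl + |ρ| with hCbdef
  have hCb0 : 0 ≤ Cb := by positivity
  set Cm : ℝ := m * Cb ^ (m-1) * Cg + |ρ| ^ m with hCmdef
  have hCm0 : 0 ≤ Cm := by positivity
  have hm1 : 1 ≤ m := le_trans one_le_two hm
  have hpow : ∀ y : ℝ, 0 < y →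
      |(NKcount K y : ℝ) ^ m - (ρ * y) ^ m| ≤ Cm * y ^ ((m:ℝ) - θ) := by
    intro y hy0
    have hmθm : (m:ℝ) - θ ≤ (m:ℝ) := by linarith
    rcases lt_or_ge y 1 with hy1 | hy1
    · rw [NKcount_eq_zero K hy1, Nat.cast_zero, zero_pow (by omega), zero_sub, abs_neg,
        abs_pow, abs_mul, abs_of_pos hy0]
      have h1 : y ^ m ≤ y ^ ((m:ℝ) - θ) := by
        have h2 : y ^ ((m:ℝ)) ≤ y ^ ((m:ℝ) - θ) :=
          Real.rpow_le_rpow_of_exponent_ge hy0 hy1.le hmθm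
        rwa [Real.rpow_natCast] at h2
      calc (|ρ| * y) ^ m = |ρ| ^ m * y ^ m := mul_pow _ _ _
        _ ≤ |ρ| ^ m * y ^ ((m:ℝ) - θ) := mul_le_mul_of_nonneg_left h1 (by positivity)
        _ ≤ Cm * y ^ ((m:ℝ) - θ) := by
            refine mul_le_mul_of_nonneg_right ?_ (Real.rpow_pos_of_pos hy0 _).le
            rw [hCmdef]
            nlinarith [mul_nonneg (mul_nonneg (Nat.cast_nonneg (α := ℝ) m)
              (pow_nonneg hCb0 (m-1))) hCg0]
    · have hgeo := geom_sum₂_mul ((NKcount K y : ℝ)) (ρ * y) m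
      have hbound : |∑ i ∈ Finset.range m,
          ((NKcount K y : ℝ)) ^ i * (ρ * y) ^ (m - 1 - i)| ≤ m * (Cb * y) ^ (m-1) := by
        refine (Finset.abs_sum_le_sum_abs _ _).trans ?_
        have hterm : ∀ i ∈ Finset.range m,
            |((NKcount K y : ℝ)) ^ i * (ρ * y) ^ (m - 1 - i)| ≤ (Cb * y) ^ (m-1) := by
          intro i hi
          rw [Finset.mem_range] at hi
          rw [abs_mul, abs_pow, abs_pow]
          have hN : |(NKcount K y : ℝ)| ≤ Cb * y := by
            rw [Nat.abs_cast]
            refine (hlin y hy1).trans ?_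
            refine mul_le_mul_of_nonneg_right ?_ (by linarith)
            rw [hCbdef]; linarith [abs_nonneg ρ]
          have hr : |ρ * y| ≤ Cb * y := by
            rw [abs_mul, abs_of_pos hy0]
            refine mul_le_mul_of_nonneg_right ?_ hy0.le
            rw [hCbdef]; linarith
          have h1 : |(NKcount K y : ℝ)| ^ i ≤ (Cb * y) ^ i :=
            pow_le_pow_left₀ (abs_nonneg _) hN i
          have h2 : |ρ * y| ^ (m-1-i) ≤ (Cb * y) ^ (m-1-i) :=
            pow_le_pow_left₀ (abs_nonneg _) hr _
          calc |(NKcount K y : ℝ)| ^ i * |ρ * y| ^ (m-1-i)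
              ≤ (Cb * y) ^ i * (Cb * y) ^ (m-1-i) := by
                exact mul_le_mul h1 h2 (by positivity) (by positivity)
            _ = (Cb * y) ^ (m-1) := by
                rw [← pow_add]
                congr 1
                omega
        calc ∑ i ∈ Finset.range m, |((NKcount K y : ℝ)) ^ i * (ρ * y) ^ (m - 1 - i)|
            ≤ ∑ _i ∈ Finset.range m, (Cb * y) ^ (m-1) := Finset.sum_le_sum hterm
          _ = m * (Cb * y) ^ (m-1) := by rw [Finset.sum_const, Finset.card_range, nsmul_eq_mul]
      calc |(NKcount K y : ℝ) ^ m - (ρ * y) ^ m|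
          = |∑ i ∈ Finset.range m, ((NKcount K y : ℝ)) ^ i * (ρ * y) ^ (m - 1 - i)|
            * |(NKcount K y : ℝ) - ρ * y| := by rw [← abs_mul, hgeo]
        _ ≤ (m * (Cb * y) ^ (m-1)) * (Cg * y ^ (1-θ)) := by
            refine mul_le_mul hbound (hEg y hy0) (abs_nonneg _) ?_
            positivity
        _ = (m * Cb ^ (m-1) * Cg) * (y ^ (m-1) * y ^ (1-θ)) := by rw [mul_pow]; ring
        _ ≤ Cm * y ^ ((m:ℝ) - θ) := by
            have hyy : y ^ (m-1) * y ^ (1-θ) = y ^ ((m:ℝ) - θ) := by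
              rw [← Real.rpow_natCast y (m-1), ← Real.rpow_add hy0]
              congr 1
              have : ((m - 1 : ℕ) : ℝ) = (m:ℝ) - 1 := by
                push_cast [Nat.cast_sub hm1]
                ring
              rw [this]
              ring
            rw [hyy, hCmdef]
            refine mul_le_mul_of_nonneg_right ?_ (Real.rpow_pos_of_pos hy0 _).le
            nlinarith [pow_nonneg (abs_nonneg ρ) m]
  -- Step E : summability, zeta identity
  have hm1R : (1:ℝ) < (m:ℝ) := by exact_mod_cast lt_of_lt_of_le one_lt_two hm
  have hm2R : (2:ℝ) ≤ (m:ℝ) := by exact_mod_cast hm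
  have hmθ1 : 1 < (m:ℝ) - θ := by linarith
  have hζS := zeta_mul_S K Cl hCl hlin ((m:ℕ):ℝ) hm1R
  have hW := summable_wgt K Cl hCl hlin ((m:ℕ):ℝ) hm1R
  obtain ⟨Cd, hCd0, hCd⟩ := dyadic_tail K Cl hCl hlin ((m:ℝ) - θ) hmθ1
  obtain ⟨Cd2, hCd20, hCd2⟩ := dyadic_tail K Cl hCl hlin ((m:ℕ):ℝ) hm1R
  set S : ℝ := ∑' Q : AQ K, wgt K ((m:ℕ):ℝ) Q with hSdef
  -- Step F : master pointwise bound
  set Ctot : ℝ := Cm * Cd + |ρ| ^ m * Cd2 + Cm * |S| with hCtotdef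
  have hCtot0 : 0 ≤ Ctot := by positivity
  have master : ∀ x : ℝ, 1 ≤ x →
      |((((Fintype.piFinset (fun _ : Fin m => Fx K x)).filter
            (fun f => (⨆ i, f i) = ⊤)).card : ℝ))
        - (NKcount K x : ℝ) ^ m * S| ≤ Ctot * x ^ ((m:ℝ) - θ) := by
    intro x hx1
    have hx0 : (0:ℝ) < x := by linarith
    -- the admissible finset corresponding to subsets of `Px K x`
    have hmemP : ∀ Q : Finset (Ideal (𝓞 K)), Q ∈ (Px K x).powerset → ∀ p ∈ Q, Prime p :=
      fun Q hQ p hp => ((mem_Px K).mp (Finset.mem_powerset.mp hQ hp)).1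
    set G' : Finset (AQ K) := (Px K x).powerset.attach.image
      (fun Q => (⟨Q.1, hmemP Q.1 Q.2⟩ : AQ K)) with hG'def
    have hmemG' : ∀ Q' : AQ K, Q' ∈ G' ↔ Q'.1 ∈ (Px K x).powerset := by
      intro Q'
      constructor
      · intro h
        obtain ⟨Q, hQ, rfl⟩ := Finset.mem_image.mp h
        exact Q.2
      · intro h
        exact Finset.mem_image.mpr ⟨⟨Q'.1, h⟩, Finset.mem_attach _ _, Subtype.ext rfl⟩
    -- identity : tuple count as a sum over G'
    have hid : ((((Fintype.piFinset (fun _ : Fin m => Fx K x)).filter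
          (fun f => (⨆ i, f i) = ⊤)).card : ℝ))
        = ∑ Q' ∈ G', (-1:ℝ) ^ Q'.1.card
            * (NKcount K (x / (absNorm (prodQ K Q').1 : ℝ)) : ℝ) ^ m := by
      rw [counting_identity K m hm1 x, hG'def]
      rw [Finset.sum_image (by intro a _ b _ h; apply Subtype.ext; exact congrArg (fun (z : AQ K) => z.1) h)]
      rw [← Finset.sum_attach ((Px K x).powerset)
        (fun Q => (-1:ℝ)^Q.card * (NKcount K (x / (absNorm (∏ p ∈ Q, p) : ℝ)) : ℝ)^m)]
      rfl
    -- abbreviations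
    have hn1 : ∀ Q' : AQ K, (1:ℝ) ≤ (absNorm (prodQ K Q').1 : ℝ) :=
      fun Q' => one_le_absNorm K (prodQ K Q').2
    have hn0 : ∀ Q' : AQ K, (0:ℝ) < (absNorm (prodQ K Q').1 : ℝ) :=
      fun Q' => lt_of_lt_of_le zero_lt_one (hn1 Q')
    -- keyA : pointwise comparison of summands
    have keyA : ∀ Q' : AQ K,
        |(-1:ℝ) ^ Q'.1.card * (NKcount K (x / (absNorm (prodQ K Q').1 : ℝ)) : ℝ) ^ m
            - ρ ^ m * x ^ m * wgt K ((m:ℕ):ℝ) Q'|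
          ≤ Cm * (x ^ ((m:ℝ) - θ) * ((absNorm (prodQ K Q').1 : ℝ)) ^ (-((m:ℝ) - θ))) := by
      intro Q'
      set n : ℝ := (absNorm (prodQ K Q').1 : ℝ) with hndef
      have hnpos : (0:ℝ) < n := hn0 Q'
      have hy0 : (0:ℝ) < x / n := div_pos hx0 hnpos
      have hwg : ρ ^ m * x ^ m * wgt K ((m:ℕ):ℝ) Q'
          = (-1:ℝ) ^ Q'.1.card * (ρ * (x / n)) ^ m := by
        rw [wgt]
        have hrn : (n:ℝ) ^ (-((m:ℕ):ℝ)) = (n ^ m)⁻¹ := by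
          rw [Real.rpow_neg hnpos.le, Real.rpow_natCast]
        rw [hrn]
        rw [mul_pow, div_pow]
        field_simp
      rw [hwg, ← mul_sub, abs_mul, abs_pow, abs_neg, abs_one, one_pow, one_mul]
      have hp := hpow (x / n) hy0
      refine hp.trans ?_
      have hdiv : (x / n) ^ ((m:ℝ) - θ) = x ^ ((m:ℝ) - θ) * n ^ (-((m:ℝ) - θ)) := by
        rw [Real.div_rpow hx0.le hnpos.le, Real.rpow_neg hnpos.le, div_eq_mul_inv]
      rw [hdiv]
    -- sumA : the sum of the error weights is bounded
    have hφinj : ∀ (u : Finset (AQ K)), Set.InjOn (fun Q' : AQ K => (prodQ K Q').1) u := by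
      intro u a _ b _ h
      exact prodQ_injective K (Subtype.ext h)
    have sumA : ∑ Q' ∈ G', ((absNorm (prodQ K Q').1 : ℝ)) ^ (-((m:ℝ) - θ)) ≤ Cd := by
      rw [← Finset.sum_image (f := fun J => ((absNorm J : ℝ)) ^ (-((m:ℝ) - θ)))
        (g := fun Q' : AQ K => (prodQ K Q').1) (hφinj G')]
      have := hCd 1 le_rfl (G'.image (fun Q' : AQ K => (prodQ K Q').1)) ?_
      · rwa [Real.one_rpow, mul_one] at this
      · intro J hJ
        obtain ⟨Q', _, rfl⟩ := Finset.mem_image.mp hJ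
        exact ⟨(prodQ K Q').2, hn1 Q'⟩
    -- key1
    have key1 : |((((Fintype.piFinset (fun _ : Fin m => Fx K x)).filter
          (fun f => (⨆ i, f i) = ⊤)).card : ℝ))
          - ρ ^ m * x ^ m * ∑ Q' ∈ G', wgt K ((m:ℕ):ℝ) Q'|
        ≤ Cm * Cd * x ^ ((m:ℝ) - θ) := by
      rw [hid, Finset.mul_sum, ← Finset.sum_sub_distrib]
      refine (Finset.abs_sum_le_sum_abs _ _).trans ?_
      calc ∑ Q' ∈ G', |(-1:ℝ) ^ Q'.1.card
              * (NKcount K (x / (absNorm (prodQ K Q').1 : ℝ)) : ℝ) ^ m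
              - ρ ^ m * x ^ m * wgt K ((m:ℕ):ℝ) Q'|
          ≤ ∑ Q' ∈ G', Cm * (x ^ ((m:ℝ) - θ)
              * ((absNorm (prodQ K Q').1 : ℝ)) ^ (-((m:ℝ) - θ))) :=
            Finset.sum_le_sum (fun Q' _ => keyA Q')
        _ = Cm * x ^ ((m:ℝ) - θ)
              * ∑ Q' ∈ G', ((absNorm (prodQ K Q').1 : ℝ)) ^ (-((m:ℝ) - θ)) := by
            rw [Finset.mul_sum]
            refine Finset.sum_congr rfl (fun Q' _ => by ring)
        _ ≤ Cm * x ^ ((m:ℝ) - θ) * Cd := by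
            refine mul_le_mul_of_nonneg_left sumA ?_
            have := (Real.rpow_pos_of_pos hx0 ((m:ℝ) - θ)).le
            positivity
        _ = Cm * Cd * x ^ ((m:ℝ) - θ) := by ring
    -- key2 : the tail of the series
    have hcompl := Summable.sum_add_tsum_compl (s := G') hW
    set tail : ℝ := ∑' (Q : ↑((↑G' : Set (AQ K))ᶜ)), wgt K ((m:ℕ):ℝ) Q.1 with htaildef
    have htail : |tail| ≤ Cd2 * x ^ (1 - (m:ℝ)) := by
      have hWsub : Summable (fun Q : ↑((↑G' : Set (AQ K))ᶜ) => |wgt K ((m:ℕ):ℝ) Q.1|) :=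
        (hW.abs).subtype _
      have h1 : |tail| ≤ ∑' (Q : ↑((↑G' : Set (AQ K))ᶜ)), |wgt K ((m:ℕ):ℝ) Q.1| := by
        rw [htaildef]
        have := norm_tsum_le_tsum_norm (f := fun Q : ↑((↑G' : Set (AQ K))ᶜ)
          => wgt K ((m:ℕ):ℝ) Q.1) (by simpa [Real.norm_eq_abs] using hWsub)
        simpa [Real.norm_eq_abs] using this
      refine h1.trans ?_
      refine Summable.tsum_le_of_sum_le hWsub ?_
      intro u
      have hinj2 : Set.InjOn (fun Q : ↑((↑G' : Set (AQ K))ᶜ) => (prodQ K Q.1).1) u := by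
        intro a _ b _ h
        exact Subtype.ext (prodQ_injective K (Subtype.ext h))
      have hsi : ∑ Q ∈ u, |wgt K ((m:ℕ):ℝ) Q.1|
          = ∑ J ∈ u.image (fun Q : ↑((↑G' : Set (AQ K))ᶜ) => (prodQ K Q.1).1),
              ((absNorm J : ℝ)) ^ (-((m:ℕ):ℝ)) := by
        rw [Finset.sum_image (f := fun J => ((absNorm J : ℝ)) ^ (-((m:ℕ):ℝ))) hinj2]
        exact Finset.sum_congr rfl (fun Q _ => abs_wgt K _ Q.1)
      rw [hsi]
      refine hCd2 x hx1 _ ?_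
      intro J hJ
      obtain ⟨Q, _, rfl⟩ := Finset.mem_image.mp hJ
      refine ⟨(prodQ K Q.1).2, ?_⟩
      -- Q.1 ∉ G', so some prime in it has norm > x
      have hnot : Q.1 ∉ G' := by
        have h := Q.2
        rw [Set.mem_compl_iff] at h
        exact fun hc => h (Finset.mem_coe.mpr hc)
      have hnotP : ¬ Q.1.1 ⊆ Px K x := by
        intro hsub
        exact hnot ((hmemG' Q.1).mpr (Finset.mem_powerset.mpr hsub))
      obtain ⟨p, hpQ, hpP⟩ := Finset.not_subset.mp hnotP
      have hpprime : Prime p := Q.1.2 p hpQ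
      have hpx : x < (absNorm p : ℝ) := by
        by_contra hle
        exact hpP ((mem_Px K).mpr ⟨hpprime, not_lt.mp hle⟩)
      have hdvd : absNorm p ∣ absNorm (prodQ K Q.1).1 :=
        map_dvd absNorm (Finset.dvd_prod_of_mem (fun p => p) hpQ)
      have hle2 : (absNorm p : ℝ) ≤ (absNorm (prodQ K Q.1).1 : ℝ) := by
        exact_mod_cast Nat.le_of_dvd (absNorm_pos' K (prodQ K Q.1).2) hdvd
      linarith
    have key2 : |ρ ^ m * x ^ m * tail| ≤ |ρ| ^ m * Cd2 * x ^ ((m:ℝ) - θ) := by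
      rw [abs_mul, abs_mul, abs_pow, abs_pow, abs_of_pos hx0]
      have hxm : x ^ m * |tail| ≤ x ^ m * (Cd2 * x ^ (1 - (m:ℝ))) :=
        mul_le_mul_of_nonneg_left htail (by positivity)
      have hxx : x ^ m * x ^ (1 - (m:ℝ)) = x := by
        rw [← Real.rpow_natCast x m, ← Real.rpow_add hx0]
        norm_num
      have hxle : x ≤ x ^ ((m:ℝ) - θ) := by
        have h1 : x ^ (1:ℝ) ≤ x ^ ((m:ℝ) - θ) :=
          Real.rpow_le_rpow_of_exponent_le hx1 (by linarith)
        rwa [Real.rpow_one] at h1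
      calc |ρ| ^ m * x ^ m * |tail| = |ρ| ^ m * (x ^ m * |tail|) := by ring
        _ ≤ |ρ| ^ m * (x ^ m * (Cd2 * x ^ (1 - (m:ℝ)))) :=
            mul_le_mul_of_nonneg_left hxm (by positivity)
        _ = |ρ| ^ m * Cd2 * (x ^ m * x ^ (1 - (m:ℝ))) := by ring
        _ = |ρ| ^ m * Cd2 * x := by rw [hxx]
        _ ≤ |ρ| ^ m * Cd2 * x ^ ((m:ℝ) - θ) := by
            refine mul_le_mul_of_nonneg_left hxle (by positivity)
    -- key3
    have key3 : |(ρ ^ m * x ^ m - (NKcount K x : ℝ) ^ m) * S|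
        ≤ Cm * |S| * x ^ ((m:ℝ) - θ) := by
      rw [abs_mul]
      have h1 : |ρ ^ m * x ^ m - (NKcount K x : ℝ) ^ m| ≤ Cm * x ^ ((m:ℝ) - θ) := by
        rw [abs_sub_comm]
        have := hpow x hx0
        rwa [mul_pow] at this
      calc |ρ ^ m * x ^ m - (NKcount K x : ℝ) ^ m| * |S|
          ≤ (Cm * x ^ ((m:ℝ) - θ)) * |S| :=
            mul_le_mul_of_nonneg_right h1 (abs_nonneg _)
        _ = Cm * |S| * x ^ ((m:ℝ) - θ) := by ring
    -- assemble
    have hsum_eq : ∑ Q' ∈ G', wgt K ((m:ℕ):ℝ) Q' = S - tail := by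
      rw [htaildef, hSdef]
      have := hcompl
      linarith
    have decomp : ((((Fintype.piFinset (fun _ : Fin m => Fx K x)).filter
          (fun f => (⨆ i, f i) = ⊤)).card : ℝ)) - (NKcount K x : ℝ) ^ m * S
        = (((((Fintype.piFinset (fun _ : Fin m => Fx K x)).filter
            (fun f => (⨆ i, f i) = ⊤)).card : ℝ))
            - ρ ^ m * x ^ m * ∑ Q' ∈ G', wgt K ((m:ℕ):ℝ) Q')
          + (- (ρ ^ m * x ^ m * tail))
          + (ρ ^ m * x ^ m - (NKcount K x : ℝ) ^ m) * S := by
      rw [hsum_eq]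
      ring
    rw [decomp]
    refine (abs_add_le _ _).trans ?_
    refine le_trans (add_le_add_left (abs_add_le _ _) _) ?_
    rw [abs_neg]
    rw [hCtotdef]
    have := key1
    have := key2
    have := key3
    linarith
  -- Step G : conclusion
  have hzeq : zetaK K ((m:ℕ):ℝ) = ∑' I : Jt K, ((absNorm I.1:ℝ)) ^ (-((m:ℕ):ℝ)) := rfl
  have hSinv : S = (zetaK K ((m:ℕ):ℝ))⁻¹ := by
    rw [hzeq]
    exact eq_inv_of_mul_eq_one_right hζS
  rw [Asymptotics.isBigO_iff]
  refine ⟨Ctot, ?_⟩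
  rw [Filter.eventually_atTop]
  refine ⟨x₀, ?_⟩
  intro x hx
  have hx1 : (1:ℝ) ≤ x := hx₀1.trans hx
  have hx0 : (0:ℝ) < x := by linarith
  have hT := master x hx1
  rw [ncard_tuples K m x]
  have hdiv : (NKcount K x : ℝ) ^ m / zetaK K ((m:ℕ):ℝ) = (NKcount K x : ℝ) ^ m * S := by
    rw [hSinv, div_eq_mul_inv]
  rw [Real.norm_eq_abs, Real.norm_eq_abs, hdiv]
  have hmono : x ^ ((m:ℝ) - θ) ≤ x ^ ((m:ℝ) - θ + ε) :=
    Real.rpow_le_rpow_of_exponent_le hx1 (by linarith)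
  have habs : |x ^ ((m:ℝ) - θ + ε)| = x ^ ((m:ℝ) - θ + ε) :=
    abs_of_pos (Real.rpow_pos_of_pos hx0 _)
  rw [habs]
  refine hT.trans ?_
  exact mul_le_mul_of_nonneg_left hmono hCtot0
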